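/- Let X be a metric space, (φ_t) a flow on X, and F: X → ℝ a measurable function. Suppose K ⊂ X is a nonempty invariant compact set and V ⊇ K is a subset such that F is constantly equal to c = sup_{x∈X} F(x) on K, and sup_{x ∈ X∖V} F(x) = c' < c. If μ is an invariant probability measure with finite entropy h_μ that is an equilibrium state for F (i.e., μ maximizes m ↦ h_m + ∫ F dm over invariant probability measures with finite entropy), then μ(X ∖ V) ≤ h_μ / (c − c'). -/

import Mathlib

open Filter MeasureTheory Topology BoundedContinuousFunction
open scoped ENNReal NNReal

section Aux

private theorem hahn_aux {E : Type*} [AddCommGroup E] [Module ℝ E] (p : E → ℝ)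
    (p_hom : ∀ r : ℝ, 0 < r → ∀ f, p (r • f) = r * p f)
    (p_add : ∀ f g, p (f + g) ≤ p f + p g) (p0 : 0 ≤ p 0) :
    ∃ L : E →ₗ[ℝ] ℝ, ∀ f, L f ≤ p f := by
  obtain ⟨L, -, hL⟩ := exists_extension_of_le_sublinear ⟨⊥, 0⟩ p p_hom p_add
    (by
      rintro ⟨x, hx⟩
      rw [Submodule.mem_bot] at hx
      subst hx
      simpa using p0)
  exact ⟨L, hL⟩

variable {X : Type*} [MetricSpace X] [MeasurableSpace X] [BorelSpace X]

set_option maxHeartbeats 1000000 in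
/-- Krylov–Bogolyubov: a continuous flow with a nonempty compact invariant set `K`
admits an invariant Borel probability measure giving no mass to `Kᶜ`. -/
theorem exists_inv_meas (φ : ℝ → X → X) (hφcont : Continuous fun p : ℝ × X => φ p.1 p.2)
    (hφ0 : ∀ x, φ 0 x = x) (hφadd : ∀ s t x, φ (s + t) x = φ s (φ t x))
    (K : Set X) (hKne : K.Nonempty) (hKcomp : IsCompact K) (hKinv : ∀ t, φ t '' K = K) :
    ∃ ν : Measure X, IsProbabilityMeasure ν ∧ (∀ t, Measure.map (φ t) ν = ν) ∧ ν Kᶜ = 0 := by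
  classical
  obtain ⟨x₀, hx₀⟩ := hKne
  have hφc : ∀ s, Continuous (φ s) := fun s =>
    hφcont.comp (continuous_const.prodMk continuous_id)
  have horb : Continuous fun t : ℝ => φ t x₀ :=
    hφcont.comp (continuous_id.prodMk continuous_const)
  have horbK : ∀ t, φ t x₀ ∈ K := fun t => by
    have h1 := Set.mem_image_of_mem (φ t) hx₀
    rwa [hKinv t] at h1
  -- the time averages along the orbit of `x₀`
  obtain ⟨A, hA⟩ : ∃ A' : (X →ᵇ ℝ) → ℕ → ℝ,
      A' = fun (f : X →ᵇ ℝ) (n : ℕ) => (∫ t in (0:ℝ)..((n : ℝ) + 1), f (φ t x₀)) / ((n : ℝ) + 1) := ⟨_, rfl⟩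
  have hnpos : ∀ n : ℕ, (0:ℝ) < (n : ℝ) + 1 := fun n => by positivity
  have hInt : ∀ (f : X →ᵇ ℝ) (a b : ℝ),
      IntervalIntegrable (fun t => f (φ t x₀)) MeasureTheory.volume a b := fun f a b =>
    (f.continuous.comp horb).intervalIntegrable a b
  have hIntBound : ∀ (f : X →ᵇ ℝ) (a b : ℝ),
      ‖∫ t in a..b, f (φ t x₀)‖ ≤ ‖f‖ * |b - a| := fun f a b =>
    intervalIntegral.norm_integral_le_of_norm_le_const fun x _ => f.norm_coe_le_norm _
  have hAbs : ∀ f n, |A f n| ≤ ‖f‖ := by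
    intro f n
    have h1 := hIntBound f 0 ((n : ℝ) + 1)
    rw [Real.norm_eq_abs, sub_zero, abs_of_pos (hnpos n)] at h1
    have : |A f n| = |∫ t in (0:ℝ)..((n : ℝ) + 1), f (φ t x₀)| / ((n : ℝ) + 1) := by
      simp only [hA]; rw [abs_div, abs_of_pos (hnpos n)]
    rw [this]
    rw [div_le_iff₀ (hnpos n)]
    calc |∫ t in (0:ℝ)..((n : ℝ) + 1), f (φ t x₀)| ≤ ‖f‖ * ((n : ℝ) + 1) := h1
    _ = ‖f‖ * ((n : ℝ) + 1) := rfl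
  have hbd : ∀ f, IsBoundedUnder (· ≤ ·) atTop (A f) := fun f =>
    isBoundedUnder_of ⟨‖f‖, fun n => (abs_le.1 (hAbs f n)).2⟩
  have hbdg : ∀ f, IsBoundedUnder (· ≥ ·) atTop (A f) := fun f =>
    isBoundedUnder_of ⟨-‖f‖, fun n => (abs_le.1 (hAbs f n)).1⟩
  have hcob : ∀ f, IsCoboundedUnder (· ≤ ·) atTop (A f) := fun f =>
    (hbdg f).isCoboundedUnder_le
  have hA_add : ∀ f g : X →ᵇ ℝ, A (f + g) = fun n => A f n + A g n := by
    intro f g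
    funext n
    simp only [hA]
    simp only [BoundedContinuousFunction.coe_add, Pi.add_apply]
    rw [intervalIntegral.integral_add (hInt f _ _) (hInt g _ _), add_div]
  have hA_neg : ∀ (f : X →ᵇ ℝ), A (-f) = fun n => -(A f n) := by
    intro f
    funext n
    simp only [hA]
    simp only [BoundedContinuousFunction.coe_neg, Pi.neg_apply]
    rw [intervalIntegral.integral_neg, neg_div]
  have hA_smul : ∀ (r : ℝ) (f : X →ᵇ ℝ), A (r • f) = fun n => r * A f n := by
    intro r f
    funext n
    simp only [hA]
    simp only [BoundedContinuousFunction.coe_smul, Pi.smul_apply, smul_eq_mul]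
    rw [intervalIntegral.integral_const_mul, mul_div_assoc]
  -- the sublinear functional
  obtain ⟨p, hp⟩ : ∃ p' : (X →ᵇ ℝ) → ℝ, p' = fun f => limsup (A f) atTop := ⟨_, rfl⟩
  have p_hom : ∀ r : ℝ, 0 < r → ∀ f, p (r • f) = r * p f := by
    intro r hr f
    have hmono : Monotone (fun x : ℝ => r * x) := fun a b hab =>
      mul_le_mul_of_nonneg_left hab hr.le
    have := hmono.map_limsup_of_continuousAt (F := atTop) (A f)
      ((continuous_const.mul continuous_id).continuousAt) (hbd f) (hcob f)
    simp only [hp, hA_smul r f]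
    exact this.symm
  have p_add : ∀ f g, p (f + g) ≤ p f + p g := by
    intro f g
    have : A (f + g) = (A f) + (A g) := by
      rw [hA_add f g]; rfl
    simp only [hp, this]
    exact limsup_add_le (hbdg f) (hbd f) (hcob g) (hbd g)
  have hA_zero : A 0 = fun _ => (0:ℝ) := by
    funext n
    simp only [hA]
    simp
  have p_zero : p 0 = 0 := by
    simp only [hp, hA_zero]; exact limsup_const 0
  obtain ⟨L, hL0⟩ := hahn_aux p p_hom p_add (le_of_eq p_zero.symm)
  have hL : ∀ f, L f ≤ limsup (A f) atTop := by
    intro f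
    have := hL0 f
    rwa [hp] at this
  -- basic estimates for L
  have hub : ∀ (f : X →ᵇ ℝ) (r : ℝ), (∀ n, A f n ≤ r) → L f ≤ r := fun f r hr =>
    (hL f).trans (limsup_le_of_le (hcob f) (Filter.Eventually.of_forall hr))
  have hlbA : ∀ (f : X →ᵇ ℝ) (r : ℝ), (∀ n, r ≤ A f n) → r ≤ L f := by
    intro f r hr
    have h2 : L (-f) ≤ -r := hub (-f) (-r) (fun n => by
      rw [hA_neg f]; simpa using hr n)
    have h3 : L (-f) = -L f := map_neg L f
    linarith
  have htend : ∀ f : X →ᵇ ℝ, Tendsto (A f) atTop (nhds 0) → L f = 0 := by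
    intro f hf
    have h1 : L f ≤ 0 := (hL f).trans_eq hf.limsup_eq
    have h2 : L (-f) ≤ 0 := by
      refine (hL (-f)).trans_eq ?_
      have : Tendsto (A (-f)) atTop (nhds 0) := by
        rw [hA_neg f]
        simpa using hf.neg
      exact this.limsup_eq
    have h3 : L (-f) = -L f := map_neg L f
    linarith
  have hub' : ∀ (f : X →ᵇ ℝ) (r : ℝ), (∀ t, f (φ t x₀) ≤ r) → L f ≤ r := by
    intro f r hr
    refine hub f r fun n => ?_
    have h1 : (∫ t in (0:ℝ)..((n : ℝ) + 1), f (φ t x₀)) ≤ ∫ _t in (0:ℝ)..((n : ℝ) + 1), r :=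
      intervalIntegral.integral_mono_on (by linarith [hnpos n]) (hInt f _ _)
        intervalIntegrable_const (fun x _ => hr x)
    have h2 : (∫ _t in (0:ℝ)..((n : ℝ) + 1), r) = ((n : ℝ) + 1) * r := by
      rw [intervalIntegral.integral_const, smul_eq_mul, sub_zero]
    simp only [hA]
    rw [div_le_iff₀ (hnpos n)]
    calc (∫ t in (0:ℝ)..((n : ℝ) + 1), f (φ t x₀)) ≤ ((n : ℝ) + 1) * r := h1.trans_eq h2
    _ = r * ((n : ℝ) + 1) := mul_comm _ _
  have hlb' : ∀ (f : X →ᵇ ℝ) (r : ℝ), (∀ t, r ≤ f (φ t x₀)) → r ≤ L f := by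
    intro f r hr
    refine hlbA f r fun n => ?_
    have h1 : (∫ _t in (0:ℝ)..((n : ℝ) + 1), r) ≤ ∫ t in (0:ℝ)..((n : ℝ) + 1), f (φ t x₀) :=
      intervalIntegral.integral_mono_on (by linarith [hnpos n]) intervalIntegrable_const
        (hInt f _ _) (fun x _ => hr x)
    have h2 : (∫ _t in (0:ℝ)..((n : ℝ) + 1), r) = ((n : ℝ) + 1) * r := by
      rw [intervalIntegral.integral_const, smul_eq_mul, sub_zero]
    simp only [hA]
    rw [le_div_iff₀ (hnpos n)]
    calc r * ((n : ℝ) + 1) = ((n : ℝ) + 1) * r := mul_comm _ _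
    _ ≤ _ := h2 ▸ h1
  -- invariance of L
  have htendC : ∀ C : ℝ, Tendsto (fun n : ℕ => C / ((n : ℝ) + 1)) atTop (nhds 0) := by
    intro C
    have h1 := (tendsto_const_div_atTop_nhds_zero_nat C).comp (tendsto_add_atTop_nat 1)
    have h2 : (fun n : ℕ => C / ((n : ℝ) + 1)) =
        (fun n : ℕ => C / ((n : ℕ) : ℝ)) ∘ (fun n : ℕ => n + 1) := by
      funext n
      simp only [Function.comp_apply]
      push_cast
      ring
    rw [h2]
    exact h1
  have hLinv : ∀ (s : ℝ) (f : X →ᵇ ℝ), L (f.compContinuous ⟨φ s, hφc s⟩) = L f := by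
    intro s f
    set g : X →ᵇ ℝ := f.compContinuous ⟨φ s, hφc s⟩ with hgdef
    have hgf : ∀ t : ℝ, g (φ t x₀) = f (φ (t + s) x₀) := fun t => by
      rw [hgdef]
      simp only [BoundedContinuousFunction.compContinuous_apply, ContinuousMap.coe_mk]
      rw [← hφadd, add_comm]
    have key : Tendsto (A (g - f)) atTop (nhds 0) := by
      have hAgf : ∀ n, A (g - f) n =
          ((∫ t in ((n:ℝ)+1)..(((n:ℝ)+1)+s), f (φ t x₀)) - ∫ t in (0:ℝ)..s, f (φ t x₀))
            / ((n : ℝ) + 1) := by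
        intro n
        have e0 : A (g - f) n = A g n - A f n := by
          simp only [hA]
          simp only [BoundedContinuousFunction.coe_sub, Pi.sub_apply]
          rw [intervalIntegral.integral_sub (hInt g _ _) (hInt f _ _), sub_div]
        have e2 : (∫ t in (0:ℝ)..((n:ℝ)+1), g (φ t x₀)) =
            ∫ t in s..(((n:ℝ)+1)+s), f (φ t x₀) := by
          rw [intervalIntegral.integral_congr (g := fun t => f (φ (t + s) x₀))
            (fun t _ => hgf t)]
          rw [intervalIntegral.integral_comp_add_right (fun u => f (φ u x₀)) s, zero_add]
        have e3 : (∫ t in s..(((n:ℝ)+1)+s), f (φ t x₀)) =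
            (∫ t in s..((n:ℝ)+1), f (φ t x₀)) + ∫ t in ((n:ℝ)+1)..(((n:ℝ)+1)+s), f (φ t x₀) :=
          (intervalIntegral.integral_add_adjacent_intervals (hInt f _ _) (hInt f _ _)).symm
        have e4 : (∫ t in (0:ℝ)..((n:ℝ)+1), f (φ t x₀)) =
            (∫ t in (0:ℝ)..s, f (φ t x₀)) + ∫ t in s..((n:ℝ)+1), f (φ t x₀) :=
          (intervalIntegral.integral_add_adjacent_intervals (hInt f _ _) (hInt f _ _)).symm
        rw [e0]
        simp only [hA]
        rw [e2, e3, e4]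
        ring
      have hb : ∀ n, ‖A (g - f) n‖ ≤ (‖f‖ * |s| + ‖f‖ * |s|) / ((n : ℝ) + 1) := by
        intro n
        rw [hAgf n, Real.norm_eq_abs, abs_div, abs_of_pos (hnpos n)]
        gcongr
        have hX := hIntBound f ((n:ℝ)+1) (((n:ℝ)+1)+s)
        have hY := hIntBound f 0 s
        rw [Real.norm_eq_abs, add_sub_cancel_left] at hX
        rw [Real.norm_eq_abs, sub_zero] at hY
        calc |(∫ t in ((n:ℝ)+1)..(((n:ℝ)+1)+s), f (φ t x₀)) - ∫ t in (0:ℝ)..s, f (φ t x₀)|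
            ≤ |∫ t in ((n:ℝ)+1)..(((n:ℝ)+1)+s), f (φ t x₀)| + |∫ t in (0:ℝ)..s, f (φ t x₀)| := by
              rw [sub_eq_add_neg]
              exact (abs_add_le _ _).trans_eq (by rw [abs_neg])
        _ ≤ ‖f‖ * |s| + ‖f‖ * |s| := add_le_add hX hY
      exact squeeze_zero_norm hb (htendC (‖f‖ * |s| + ‖f‖ * |s|))
    have h0 : L (g - f) = 0 := htend _ key
    have h1 : L (g - f) = L g - L f := map_sub L g f
    linarith
  have hnonnegL : ∀ f : X →ᵇ ℝ, (∀ x, 0 ≤ f x) → 0 ≤ L f := fun f hf =>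
    hlb' f 0 fun t => hf _
  -- candidate test functions and the associated Riesz content
  obtain ⟨cand, hcand⟩ : ∃ cand' : Set X → Set (X →ᵇ ℝ),
      cand' = fun C => {f : X →ᵇ ℝ | (∀ x, 0 ≤ f x) ∧ ∀ x ∈ C, 1 ≤ f x} := ⟨_, rfl⟩
  obtain ⟨lam, hlam⟩ : ∃ lam' : Set X → ℝ,
      lam' = fun C => sInf (L '' cand C) := ⟨_, rfl⟩
  have hcand_mem : ∀ (C : Set X) (f : X →ᵇ ℝ),
      f ∈ cand C ↔ (∀ x, 0 ≤ f x) ∧ ∀ x ∈ C, 1 ≤ f x := by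
    intro C f
    rw [hcand]
    exact Iff.rfl
  have hone : ∀ C : Set X, (1 : X →ᵇ ℝ) ∈ cand C := by
    intro C
    rw [hcand_mem]
    constructor
    · intro x
      simp
    · intro x _
      simp
  have hne : ∀ C : Set X, (L '' cand C).Nonempty := fun C => ⟨L 1, 1, hone C, rfl⟩
  have hlb0 : ∀ C : Set X, ∀ y ∈ L '' cand C, (0:ℝ) ≤ y := by
    rintro C y ⟨f, hf, rfl⟩
    rw [hcand_mem] at hf
    exact hnonnegL f hf.1
  have hbddS : ∀ C : Set X, BddBelow (L '' cand C) := fun C => ⟨0, fun y hy => hlb0 C y hy⟩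
  have hle : ∀ (C : Set X) (f : X →ᵇ ℝ), f ∈ cand C → lam C ≤ L f := by
    intro C f hf
    rw [hlam]
    exact csInf_le (hbddS C) ⟨f, hf, rfl⟩
  have hge : ∀ (C : Set X) (r : ℝ), (∀ f ∈ cand C, r ≤ L f) → r ≤ lam C := by
    intro C r hr
    rw [hlam]
    refine le_csInf (hne C) ?_
    rintro y ⟨f, hf, rfl⟩
    exact hr f hf
  have hlam_nonneg : ∀ C : Set X, 0 ≤ lam C := fun C => hge C 0 fun f hf => by
    rw [hcand_mem] at hf
    exact hnonnegL f hf.1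
  have hL1 : L (1 : X →ᵇ ℝ) = 1 := by
    refine le_antisymm (hub' 1 1 fun t => ?_) (hlb' 1 1 fun t => ?_) <;> simp
  have hlam_le_one : ∀ C : Set X, lam C ≤ 1 := fun C =>
    (hle C 1 (hone C)).trans_eq hL1
  have hlam_mono : ∀ C₁ C₂ : Set X, C₁ ⊆ C₂ → lam C₁ ≤ lam C₂ := by
    intro C₁ C₂ hsub
    refine hge C₂ (lam C₁) fun f hf => hle C₁ f ?_
    rw [hcand_mem] at hf ⊢
    exact ⟨hf.1, fun x hx => hf.2 x (hsub hx)⟩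
  have hpair : ∀ (C₁ C₂ : Set X) (f g : X →ᵇ ℝ), f ∈ cand C₁ → g ∈ cand C₂ →
      lam (C₁ ∪ C₂) ≤ L f + L g := by
    intro C₁ C₂ f g hf hg
    rw [hcand_mem] at hf hg
    have hmem : f + g ∈ cand (C₁ ∪ C₂) := by
      rw [hcand_mem]
      constructor
      · intro x
        simp only [BoundedContinuousFunction.coe_add, Pi.add_apply]
        exact add_nonneg (hf.1 x) (hg.1 x)
      · intro x hx
        simp only [BoundedContinuousFunction.coe_add, Pi.add_apply]
        rcases hx with hx | hx
        · linarith [hf.2 x hx, hg.1 x]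
        · linarith [hg.2 x hx, hf.1 x]
    calc lam (C₁ ∪ C₂) ≤ L (f + g) := hle _ _ hmem
    _ = L f + L g := map_add L f g
  have hlam_union_le : ∀ C₁ C₂ : Set X, lam (C₁ ∪ C₂) ≤ lam C₁ + lam C₂ := by
    intro C₁ C₂
    have h1 : ∀ f ∈ cand C₁, lam (C₁ ∪ C₂) - L f ≤ lam C₂ := by
      intro f hf
      refine hge C₂ _ fun g hg => ?_
      linarith [hpair C₁ C₂ f g hf hg]
    have h2 : lam (C₁ ∪ C₂) - lam C₂ ≤ lam C₁ := by
      refine hge C₁ _ fun f hf => ?_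
      linarith [h1 f hf]
    linarith
  have hlam_union_ge : ∀ C₁ C₂ : Set X, IsClosed C₁ → IsClosed C₂ → Disjoint C₁ C₂ →
      lam C₁ + lam C₂ ≤ lam (C₁ ∪ C₂) := by
    intro C₁ C₂ hcl₁ hcl₂ hdis
    refine hge (C₁ ∪ C₂) _ fun f hf => ?_
    rw [hcand_mem] at hf
    obtain ⟨g, hg0, hg1, hg01⟩ :=
      exists_continuous_zero_one_of_isClosed hcl₂ hcl₁ hdis.symm
    let gB : X →ᵇ ℝ := BoundedContinuousFunction.ofNormedAddCommGroup g g.continuous 1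
      (fun x => by
        rw [Real.norm_eq_abs, abs_le]
        exact ⟨by linarith [(hg01 x).1], (hg01 x).2⟩)
    have hgB : ∀ x, gB x = g x := fun _ => rfl
    have hm1 : f * gB ∈ cand C₁ := by
      rw [hcand_mem]
      constructor
      · intro x
        simp only [BoundedContinuousFunction.coe_mul, Pi.mul_apply]
        exact mul_nonneg (hf.1 x) (by rw [hgB]; exact (hg01 x).1)
      · intro x hx
        have hx1 : gB x = 1 := by rw [hgB]; exact hg1 hx
        simp only [BoundedContinuousFunction.coe_mul, Pi.mul_apply, hx1, mul_one]
        exact hf.2 x (Or.inl hx)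
    have hm2 : f - f * gB ∈ cand C₂ := by
      rw [hcand_mem]
      constructor
      · intro x
        have : (f - f * gB) x = f x * (1 - gB x) := by
          simp only [BoundedContinuousFunction.coe_sub, BoundedContinuousFunction.coe_mul,
            Pi.sub_apply, Pi.mul_apply]
          ring
        rw [this]
        exact mul_nonneg (hf.1 x) (by rw [hgB]; linarith [(hg01 x).2])
      · intro x hx
        have hx0 : gB x = 0 := by rw [hgB]; exact hg0 hx
        simp only [BoundedContinuousFunction.coe_sub, BoundedContinuousFunction.coe_mul,
          Pi.sub_apply, Pi.mul_apply, hx0, mul_zero, sub_zero]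
        exact hf.2 x (Or.inr hx)
    calc lam C₁ + lam C₂ ≤ L (f * gB) + L (f - f * gB) :=
          add_le_add (hle _ _ hm1) (hle _ _ hm2)
    _ = L f := by rw [← map_add L, add_sub_cancel]
  -- the content
  let μc : Content X :=
    { toFun := fun C => Real.toNNReal (lam C)
      mono' := fun C₁ C₂ hsub => Real.toNNReal_mono (hlam_mono _ _ hsub)
      sup_disjoint' := by
        intro C₁ C₂ hdis hcl₁ hcl₂
        have heq : lam (↑C₁ ∪ ↑C₂) = lam ↑C₁ + lam ↑C₂ :=
          le_antisymm (hlam_union_le _ _) (hlam_union_ge _ _ hcl₁ hcl₂ hdis)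
        simp only [TopologicalSpace.Compacts.coe_sup]
        rw [heq, Real.toNNReal_add (hlam_nonneg _) (hlam_nonneg _)]
      sup_le' := by
        intro C₁ C₂
        simp only [TopologicalSpace.Compacts.coe_sup]
        calc Real.toNNReal (lam (↑C₁ ∪ ↑C₂)) ≤ Real.toNNReal (lam ↑C₁ + lam ↑C₂) :=
              Real.toNNReal_mono (hlam_union_le _ _)
        _ = _ := Real.toNNReal_add (hlam_nonneg _) (hlam_nonneg _) }
  have hμc_apply : ∀ C : TopologicalSpace.Compacts X,
      (μc C : ℝ≥0∞) = (Real.toNNReal (lam ↑C) : ℝ≥0∞) := fun C => rfl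
  -- the flow as homeomorphisms
  have hinv_pt : ∀ (s : ℝ) (x : X), φ (-s) (φ s x) = x := fun s x => by
    rw [← hφadd, neg_add_cancel, hφ0]
  have hinv_pt' : ∀ (s : ℝ) (x : X), φ s (φ (-s) x) = x := fun s x => by
    rw [← hφadd, add_neg_cancel, hφ0]
  let e : ℝ → X ≃ₜ X := fun s =>
    { toFun := φ s
      invFun := φ (-s)
      left_inv := hinv_pt s
      right_inv := hinv_pt' s
      continuous_toFun := hφc s
      continuous_invFun := hφc (-s) }
  -- invariance of the content
  have hlam_img : ∀ (s : ℝ) (C : Set X), lam (φ s '' C) = lam C := by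
    intro s C
    refine le_antisymm (hge C _ fun f hf => ?_) (hge (φ s '' C) _ fun f hf => ?_)
    · -- lam (φ s '' C) ≤ L f for f ∈ cand C
      rw [hcand_mem] at hf
      set g : X →ᵇ ℝ := f.compContinuous ⟨φ (-s), hφc (-s)⟩ with hgdef
      have hgmem : g ∈ cand (φ s '' C) := by
        rw [hcand_mem]
        constructor
        · intro x
          exact hf.1 _
        · rintro _ ⟨x, hx, rfl⟩
          show (1:ℝ) ≤ f (φ (-s) (φ s x))
          rw [hinv_pt s x]
          exact hf.2 x hx
      have hgL : L g = L f := by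
        have h1 := hLinv s g
        have h2 : g.compContinuous ⟨φ s, hφc s⟩ = f := by
          ext x
          show f (φ (-s) (φ s x)) = f x
          rw [hinv_pt s x]
        rw [h2] at h1
        exact h1.symm
      exact (hle _ _ hgmem).trans_eq hgL
    · -- lam C ≤ L f for f ∈ cand (φ s '' C)
      rw [hcand_mem] at hf
      have hgmem : f.compContinuous ⟨φ s, hφc s⟩ ∈ cand C := by
        rw [hcand_mem]
        constructor
        · intro x
          exact hf.1 _
        · intro x hx
          exact hf.2 _ (Set.mem_image_of_mem _ hx)
      exact (hle _ _ hgmem).trans_eq (hLinv s f)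
  have hcont_inv : ∀ (s : ℝ), ∀ ⦃C : TopologicalSpace.Compacts X⦄,
      (μc (C.map (e s) (e s).continuous) : ℝ≥0∞) = μc C := by
    intro s C
    rw [hμc_apply, hμc_apply]
    have hset : ((C.map (e s) (e s).continuous : TopologicalSpace.Compacts X) : Set X)
        = φ s '' (C : Set X) := TopologicalSpace.Compacts.coe_map _ _
    rw [hset, hlam_img s]
  -- conclusion
  refine ⟨μc.measure, ⟨?_⟩, fun t => ?_, ?_⟩
  · -- probability
    rw [Content.measure_apply _ MeasurableSet.univ,
      μc.outerMeasure_of_isOpen Set.univ isOpen_univ]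
    refine le_antisymm ?_ ?_
    · unfold Content.innerContent
      refine iSup_le fun C => iSup_le fun _ => ?_
      rw [hμc_apply]
      refine ENNReal.coe_le_one_iff.2 ?_
      exact Real.toNNReal_le_one.2 (hlam_le_one _)
    · have hlamK : lam K = 1 := by
        refine le_antisymm (hlam_le_one K) (hge K 1 fun f hf => ?_)
        rw [hcand_mem] at hf
        exact hlb' f 1 fun t => hf.2 _ (horbK t)
      have h1 := μc.le_innerContent ⟨K, hKcomp⟩ ⟨Set.univ, isOpen_univ⟩ (Set.subset_univ _)
      refine le_trans ?_ h1
      rw [hμc_apply]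
      simp [hlamK]
  · -- invariance
    refine Measure.ext fun s hs => ?_
    rw [Measure.map_apply (hφc t).measurable hs,
      Content.measure_apply _ (hs.preimage (hφc t).measurable),
      Content.measure_apply _ hs]
    exact μc.outerMeasure_preimage (e t) (hcont_inv t) s
  · -- no mass outside K
    have hopen : IsOpen Kᶜ := hKcomp.isClosed.isOpen_compl
    rw [Content.measure_apply _ hopen.measurableSet,
      μc.outerMeasure_of_isOpen _ hopen]
    refine le_antisymm ?_ zero_le
    unfold Content.innerContent
    refine iSup_le fun C => iSup_le fun hC => ?_
    have hdisj : Disjoint K (C : Set X) :=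
      Set.disjoint_left.2 fun x hxK hxC => hC hxC hxK
    obtain ⟨g, hg0, hg1, hg01⟩ :=
      exists_continuous_zero_one_of_isClosed hKcomp.isClosed C.isCompact.isClosed hdisj
    let gB : X →ᵇ ℝ := BoundedContinuousFunction.ofNormedAddCommGroup g g.continuous 1
      (fun x => by
        rw [Real.norm_eq_abs, abs_le]
        exact ⟨by linarith [(hg01 x).1], (hg01 x).2⟩)
    have hgB : ∀ x, gB x = g x := fun _ => rfl
    have hmem : gB ∈ cand (C : Set X) := by
      rw [hcand_mem]
      constructor
      · intro x
        rw [hgB]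
        exact (hg01 x).1
      · intro x hx
        rw [hgB]
        exact le_of_eq (hg1 hx).symm
    have hlamC : lam (C : Set X) ≤ 0 := by
      refine (hle _ _ hmem).trans (hub' gB 0 fun t => ?_)
      rw [hgB]
      exact le_of_eq (hg0 (horbK t))
    rw [hμc_apply]
    simp [Real.toNNReal_of_nonpos hlamC]

end Aux

/-- Let `X` be a metric space, `φ` a continuous flow on `X`, and
`F : X → ℝ` a measurable function. Suppose `K` is a nonempty invariant compact set,
`V ⊇ K`, `F ≡ c = sup F` on `K`, and `sup_{X ∖ V} F = c' < c`. If `μ` is an invariant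
probability measure which is an equilibrium state for `F` (it maximizes
`m ↦ h m + ∫ F dm` over invariant probability measures, where `h` is a nonnegative
abstract entropy functional), then `μ(X ∖ V) ≤ h μ / (c - c')`. -/
theorem stmt0 {X : Type*} [MetricSpace X] [MeasurableSpace X] [BorelSpace X]
    (φ : ℝ → X → X) (hφcont : Continuous fun p : ℝ × X => φ p.1 p.2)
    (hφ0 : ∀ x, φ 0 x = x) (hφadd : ∀ s t x, φ (s + t) x = φ s (φ t x))
    (F : X → ℝ) (hFmeas : Measurable F)
    (K V : Set X) (hKne : K.Nonempty) (hKcomp : IsCompact K)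
    (hKinv : ∀ t, φ t '' K = K) (hKV : K ⊆ V) (hVmeas : MeasurableSet V)
    (c c' : ℝ) (hc : IsLUB (Set.range F) c) (hcK : ∀ x ∈ K, F x = c)
    (hc' : IsLUB (F '' Vᶜ) c') (hlt : c' < c)
    (h : Measure X → ℝ) (hnonneg : ∀ m, 0 ≤ h m)
    (μ : Measure X) [IsProbabilityMeasure μ]
    (hμinv : ∀ t, Measure.map (φ t) μ = μ) (hμint : Integrable F μ)
    (heq : ∀ m : Measure X, IsProbabilityMeasure m → (∀ t, Measure.map (φ t) m = m) →
      Integrable F m → h m + ∫ x, F x ∂m ≤ h μ + ∫ x, F x ∂μ) :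
    (μ Vᶜ).toReal ≤ h μ / (c - c') := by
  obtain ⟨ν, hprob, hinv, hν0⟩ := exists_inv_meas φ hφcont hφ0 hφadd K hKne hKcomp hKinv
  haveI := hprob
  have hae : F =ᵐ[ν] fun _ => c := by
    rw [Filter.EventuallyEq, ae_iff]
    refine measure_mono_null (fun x hx => ?_) hν0
    intro hxK
    exact hx (hcK x hxK)
  have hFint : Integrable F ν := (integrable_const c).congr hae.symm
  have hFintc : ∫ x, F x ∂ν = c := by
    rw [integral_congr_ae hae, integral_const]
    simp
  have hkey := heq ν hprob hinv hFint
  rw [hFintc] at hkey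
  have h0 : c ≤ h μ + ∫ x, F x ∂μ := by linarith [hnonneg ν]
  have hμV : (μ V).toReal + (μ Vᶜ).toReal = 1 := by
    rw [← ENNReal.toReal_add (measure_ne_top μ V) (measure_ne_top μ Vᶜ),
      measure_add_measure_compl hVmeas]
    simp
  have hIV : ∫ x in V, F x ∂μ ≤ (μ V).toReal * c := by
    calc ∫ x in V, F x ∂μ ≤ ∫ _x in V, c ∂μ :=
          setIntegral_mono_on hμint.integrableOn
            (integrableOn_const (measure_ne_top μ V)) hVmeas
            (fun x _ => hc.1 ⟨x, rfl⟩)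
    _ = (μ V).toReal * c := by rw [setIntegral_const, smul_eq_mul]; rfl
  have hIVc : ∫ x in Vᶜ, F x ∂μ ≤ (μ Vᶜ).toReal * c' := by
    calc ∫ x in Vᶜ, F x ∂μ ≤ ∫ _x in Vᶜ, c' ∂μ :=
          setIntegral_mono_on hμint.integrableOn
            (integrableOn_const (measure_ne_top μ Vᶜ)) hVmeas.compl
            (fun x hx => hc'.1 ⟨x, hx, rfl⟩)
    _ = (μ Vᶜ).toReal * c' := by rw [setIntegral_const, smul_eq_mul]; rfl
  have hsplit : ∫ x, F x ∂μ = (∫ x in V, F x ∂μ) + ∫ x in Vᶜ, F x ∂μ :=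
    (integral_add_compl hVmeas hμint).symm
  rw [hsplit] at h0
  rw [le_div_iff₀ (sub_pos.2 hlt)]
  have hq : (μ V).toReal = 1 - (μ Vᶜ).toReal := by linarith
  have hIV' : ∫ x in V, F x ∂μ ≤ c - (μ Vᶜ).toReal * c := by
    rw [hq] at hIV
    nlinarith [hIV]
  calc (μ Vᶜ).toReal * (c - c') = (μ Vᶜ).toReal * c - (μ Vᶜ).toReal * c' := by ring
  _ ≤ h μ := by linarith [hIV', hIVc, h0]
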